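/- Let H be a graph and 𝔠 a partition of E(H) into k matchings such that the union of any two matchings in 𝔠 is a connected edge set. Then every edge xy of H satisfies d_H(x) + d_H(y) ≥ k + 1. -/
import Mathlib


/-- A multigraph (possibly with parallel edges, but loopless). -/
structure Multigraph (V E : Type*) where
  ends : E → Sym2 V
  not_isDiag : ∀ e, ¬ (ends e).IsDiag

namespace Multigraph

variable {V E : Type*} (G : Multigraph V E)

/-- A matching: a set of pairwise non-incident edges. -/
def Matching (M : Set E) : Prop :=
  ∀ e ∈ M, ∀ f ∈ M, e ≠ f → ¬ ∃ v : V, v ∈ G.ends e ∧ v ∈ G.ends f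

/-- An edge set `F` is connected if it is nonempty and any two of its edges are
linked by a chain of edges of `F`, consecutive ones sharing an endpoint. -/
def EdgesConnected (F : Set E) : Prop :=
  F.Nonempty ∧ ∀ e ∈ F, ∀ f ∈ F,
    Relation.ReflTransGen
      (fun a b => a ∈ F ∧ b ∈ F ∧ ∃ v : V, v ∈ G.ends a ∧ v ∈ G.ends b) e f

/-- The degree of a vertex: the number of edges incident with it. -/
noncomputable def deg (v : V) : ℕ := {e : E | v ∈ G.ends e}.ncard

end Multigraph

/-- If `E(H)` is partitioned into `k` matchings, the union of any two of them being
connected, then every edge `xy` satisfies `d(x) + d(y) ≥ k + 1`. -/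
theorem degree_sum_of_edge {V E : Type*} [Fintype V] [Fintype E]
    (G : Multigraph V E) (𝔠 : Set (Set E)) (k : ℕ) (hk : 𝔠.ncard = k)
    (hne : ∀ M ∈ 𝔠, M.Nonempty) (hcov : ⋃₀ 𝔠 = Set.univ)
    (hdisj : ∀ M ∈ 𝔠, ∀ N ∈ 𝔠, M ≠ N → Disjoint M N)
    (hmatch : ∀ M ∈ 𝔠, G.Matching M)
    (hconn : ∀ M ∈ 𝔠, ∀ N ∈ 𝔠, M ≠ N → G.EdgesConnected (M ∪ N)) :
    ∀ (e : E) (x y : V), G.ends e = s(x, y) → k + 1 ≤ G.deg x + G.deg y := by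
  classical
  intro e x y hxy
  have he : e ∈ ⋃₀ 𝔠 := by rw [hcov]; trivial
  obtain ⟨M₀, hM₀, heM₀⟩ := he
  have hx : x ∈ G.ends e := by rw [hxy]; exact Sym2.mem_mk_left x y
  have hy : y ∈ G.ends e := by rw [hxy]; exact Sym2.mem_mk_right x y
  have key : ∀ M ∈ 𝔠, ∃ f ∈ M, x ∈ G.ends f ∨ y ∈ G.ends f := by
    intro N hN
    by_cases hMN : N = M₀
    · exact ⟨e, hMN ▸ heM₀, Or.inl hx⟩
    by_contra hcon
    push_neg at hcon
    obtain ⟨g, hg⟩ := hne N hN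
    have hco := hconn M₀ hM₀ N hN (Ne.symm hMN)
    have hreach := hco.2 e (Or.inl heM₀) g (Or.inr hg)
    have hstay : ∀ f, Relation.ReflTransGen
        (fun a b => a ∈ M₀ ∪ N ∧ b ∈ M₀ ∪ N ∧
          ∃ v : V, v ∈ G.ends a ∧ v ∈ G.ends b) e f → f = e := by
      intro f hf
      induction hf with
      | refl => rfl
      | tail hb hr ih =>
        obtain ⟨_, hc, v, hv1, hv2⟩ := hr
        rw [ih] at hv1
        rcases hc with hc | hc
        · by_contra hne'
          exact (hmatch M₀ hM₀ e heM₀ _ hc (Ne.symm hne')) ⟨v, hv1, hv2⟩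
        · exfalso
          have hv1' := hv1
          rw [hxy, Sym2.mem_iff] at hv1'
          rcases hv1' with rfl | rfl
          · exact (hcon _ hc).1 hv2
          · exact (hcon _ hc).2 hv2
    have hge : g = e := hstay g hreach
    exact Set.disjoint_left.mp (hdisj M₀ hM₀ N hN (Ne.symm hMN)) heM₀ (hge ▸ hg)
  -- choose witnesses
  have key' : ∀ M : Set E, ∃ f : E, M ∈ 𝔠 → f ∈ M ∧ (x ∈ G.ends f ∨ y ∈ G.ends f) := by
    intro M
    by_cases hM : M ∈ 𝔠
    · obtain ⟨f, hf1, hf2⟩ := key M hM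
      exact ⟨f, fun _ => ⟨hf1, hf2⟩⟩
    · exact ⟨e, fun h => absurd h hM⟩
  choose φ hφ using key'
  set Ix : Set E := {f : E | x ∈ G.ends f} with hIx
  set Iy : Set E := {f : E | y ∈ G.ends f} with hIy
  have hmaps : ∀ M ∈ 𝔠, φ M ∈ Ix ∪ Iy := by
    intro M hM
    rcases (hφ M hM).2 with h | h
    · exact Or.inl h
    · exact Or.inr h
  have hinj : Set.InjOn φ 𝔠 := by
    intro M hM N hN hMN
    by_contra hne'
    exact Set.disjoint_left.mp (hdisj M hM N hN hne') (hφ M hM).1 (hMN ▸ (hφ N hN).1)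
  have h1 : 𝔠.ncard ≤ (Ix ∪ Iy).ncard :=
    Set.ncard_le_ncard_of_injOn φ hmaps hinj (Set.toFinite _)
  have h2 : 1 ≤ (Ix ∩ Iy).ncard := by
    have : e ∈ Ix ∩ Iy := ⟨hx, hy⟩
    have := (Set.ncard_pos (Set.toFinite _)).mpr ⟨e, this⟩
    omega
  have h3 : (Ix ∪ Iy).ncard + (Ix ∩ Iy).ncard = Ix.ncard + Iy.ncard :=
    Set.ncard_union_add_ncard_inter Ix Iy
  have hdx : G.deg x = Ix.ncard := rfl
  have hdy : G.deg y = Iy.ncard := rfl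
  omega
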